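/- Let I be the two-sided ideal of A generated by all commutators ab − ba (a, b ∈ A). Then there is a K-algebra isomorphism from A/I onto the quotient of the commutative polynomial ring K[X_i, Y_i : i ∈ ℤ] by the ideal generated by the elements X_i Y_i − q/(q−1)² and X_{i+1} Y_i − q/(q−1)² (i ∈ ℤ), sending the class of x_i to the class of X_i and the class of y_i to the class of Y_i. -/

import Mathlib

/-!
Statement 0. Fix a prime power `q`. Let `v = √q ∈ ℝ`, `K = ℚ(v) ⊆ ℝ`, and let `A` be the
`K`-algebra presented by generators `x i, y i` (`i ∈ ℤ`) and the nine families of relations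
(1)–(9) of the paper.  Then there is a unique `K`-algebra homomorphism
`φ : A → K[x,x⁻¹]` with `φ (x i) = (v/(v²−1))·x` and `φ (y i) = (v/(v²−1))·x⁻¹` for all `i`.
-/

noncomputable section

open FreeAlgebra

/-- The free algebra generator `x_i`. -/
abbrev xF (K : Type) [Field K] (i : ℤ) : FreeAlgebra K (ℤ ⊕ ℤ) :=
  FreeAlgebra.ι K (Sum.inl i)

/-- The free algebra generator `y_i`. -/
abbrev yF (K : Type) [Field K] (i : ℤ) : FreeAlgebra K (ℤ ⊕ ℤ) :=
  FreeAlgebra.ι K (Sum.inr i)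

/-- The defining relations (1)–(9) of the algebra `A`, with parameter `q`. -/
inductive SphRel (K : Type) [Field K] (q : K) :
    FreeAlgebra K (ℤ ⊕ ℤ) → FreeAlgebra K (ℤ ⊕ ℤ) → Prop
  | x1 (i : ℤ) : SphRel K q
      (xF K i * xF K i * xF K (i-1) - (1 + q⁻¹) • (xF K i * xF K (i-1) * xF K i)
        + q⁻¹ • (xF K (i-1) * xF K i * xF K i)) 0
  | x2 (i : ℤ) : SphRel K q
      (xF K i * xF K (i-1) * xF K (i-1) - (1 + q⁻¹) • (xF K (i-1) * xF K i * xF K (i-1))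
        + q⁻¹ • (xF K (i-1) * xF K (i-1) * xF K i)) 0
  | x3 (i j : ℤ) (h : 1 < |i - j|) : SphRel K q (xF K i * xF K j) (xF K j * xF K i)
  | yx1 (i : ℤ) : SphRel K q
      (yF K i * xF K i - q • (xF K i * yF K i) + (q / (q - 1)) • (1 : FreeAlgebra K (ℤ ⊕ ℤ))) 0
  | yx2 (i : ℤ) : SphRel K q
      (yF K i * xF K (i+1) - q⁻¹ • (xF K (i+1) * yF K i)
        - (1 / (q - 1)) • (1 : FreeAlgebra K (ℤ ⊕ ℤ))) 0
  | yx3 (i j : ℤ) (h1 : j ≠ i) (h2 : j ≠ i + 1) :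
      SphRel K q (yF K i * xF K j) (xF K j * yF K i)
  | y1 (i : ℤ) : SphRel K q
      (yF K i * yF K i * yF K (i-1) - (1 + q⁻¹) • (yF K i * yF K (i-1) * yF K i)
        + q⁻¹ • (yF K (i-1) * yF K i * yF K i)) 0
  | y2 (i : ℤ) : SphRel K q
      (yF K i * yF K (i-1) * yF K (i-1) - (1 + q⁻¹) • (yF K (i-1) * yF K i * yF K (i-1))
        + q⁻¹ • (yF K (i-1) * yF K (i-1) * yF K i)) 0
  | y3 (i j : ℤ) (h : 1 < |i - j|) : SphRel K q (yF K i * yF K j) (yF K j * yF K i)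

/-- The algebra `A` presented by the generators `x_i, y_i` and the relations (1)–(9). -/
abbrev SphAlg (K : Type) [Field K] (q : K) : Type := RingQuot (SphRel K q)

/-- The generator `x_i` of `A`. -/
abbrev xA (K : Type) [Field K] (q : K) (i : ℤ) : SphAlg K q :=
  RingQuot.mkAlgHom K (SphRel K q) (xF K i)

/-- The generator `y_i` of `A`. -/
abbrev yA (K : Type) [Field K] (q : K) (i : ℤ) : SphAlg K q :=
  RingQuot.mkAlgHom K (SphRel K q) (yF K i)

/-- `K = ℚ(√q)`, the subfield of `ℝ` generated over `ℚ` by `v = √q`. -/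
abbrev Kf (q : ℕ) : Type := ↥(IntermediateField.adjoin ℚ {Real.sqrt q})

/-- `v = √q`, as an element of `K = ℚ(√q)`. -/
def vK (q : ℕ) : Kf q :=
  ⟨Real.sqrt q, IntermediateField.subset_adjoin ℚ {Real.sqrt q} rfl⟩

/-- The commutation relation on `A`, whose associated quotient `RingQuot` is the quotient of
`A` by the two-sided ideal `I` generated by all commutators. -/
abbrev CommRel (K : Type) [Field K] (q : K) : SphAlg K q → SphAlg K q → Prop :=
  fun u w => ∃ a b : SphAlg K q, u = a * b ∧ w = b * a

open MvPolynomial in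
/-- The ideal of the polynomial ring `K[X_i, Y_i : i ∈ ℤ]` generated by the elements
`X_i Y_i − q/(q−1)²` and `X_{i+1} Y_i − q/(q−1)²`. -/
abbrev TorusIdeal (K : Type) [Field K] (q : K) : Ideal (MvPolynomial (ℤ ⊕ ℤ) K) :=
  Ideal.span
    ((Set.range fun i : ℤ =>
        (X (Sum.inl i) * X (Sum.inr i) - C (q / (q - 1) ^ 2) : MvPolynomial (ℤ ⊕ ℤ) K)) ∪
     (Set.range fun i : ℤ =>
        (X (Sum.inl (i + 1)) * X (Sum.inr i) - C (q / (q - 1) ^ 2) : MvPolynomial (ℤ ⊕ ℤ) K)))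

section AuxProofs

variable {K : Type} [Field K]

/-- The abelianization `A/I` is commutative. -/
instance commRingAb (q : K) : CommRing (RingQuot (CommRel K q)) :=
  { (inferInstance : Ring (RingQuot (CommRel K q))) with
    mul_comm := by
      intro a b
      obtain ⟨x, rfl⟩ := RingQuot.mkRingHom_surjective _ a
      obtain ⟨y, rfl⟩ := RingQuot.mkRingHom_surjective _ b
      rw [← map_mul, ← map_mul]
      exact RingQuot.mkRingHom_rel ⟨x, y, rfl, rfl⟩ }

lemma solve1 {q : K} {B : Type} [CommRing B] [Algebra K B] (hq1 : q - 1 ≠ 0) (a b : B)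
    (h : b * a - q • (a * b) + (q / (q - 1)) • (1 : B) = 0) :
    a * b = algebraMap K B (q / (q - 1) ^ 2) := by
  have h1q : (1 : K) - q ≠ 0 := fun hc => hq1 (by linear_combination -hc)
  rw [mul_comm b a] at h
  have h2 : ((1 : K) - q) • (a * b) = (-(q / (q - 1)) : K) • (1 : B) := by
    rw [sub_smul, one_smul, neg_smul]
    exact eq_neg_of_add_eq_zero_left h
  calc a * b = ((1 - q)⁻¹ * (1 - q)) • (a * b) := by
        rw [inv_mul_cancel₀ h1q, one_smul]
    _ = (1 - q)⁻¹ • (((1 : K) - q) • (a * b)) := by rw [smul_smul]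
    _ = (1 - q)⁻¹ • ((-(q / (q - 1)) : K) • (1 : B)) := by rw [h2]
    _ = ((1 - q)⁻¹ * -(q / (q - 1))) • (1 : B) := by rw [smul_smul]
    _ = algebraMap K B (q / (q - 1) ^ 2) := by
        rw [Algebra.algebraMap_eq_smul_one]
        congr 1
        field_simp
        ring

lemma solve2 {q : K} {B : Type} [CommRing B] [Algebra K B] (hq0 : q ≠ 0) (hq1 : q - 1 ≠ 0)
    (a b : B)
    (h : b * a - q⁻¹ • (a * b) - (1 / (q - 1)) • (1 : B) = 0) :
    a * b = algebraMap K B (q / (q - 1) ^ 2) := by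
  have h1q : (1 : K) - q⁻¹ ≠ 0 := by
    intro hc
    apply hq1
    have h' : q⁻¹ = 1 := by linear_combination -hc
    rw [sub_eq_zero, ← inv_inv q, h', inv_one]
  rw [mul_comm b a, sub_eq_zero] at h
  have h2 : ((1 : K) - q⁻¹) • (a * b) = ((1 / (q - 1)) : K) • (1 : B) := by
    rw [sub_smul, one_smul]
    exact h
  calc a * b = ((1 - q⁻¹)⁻¹ * (1 - q⁻¹)) • (a * b) := by
        rw [inv_mul_cancel₀ h1q, one_smul]
    _ = (1 - q⁻¹)⁻¹ • (((1 : K) - q⁻¹) • (a * b)) := by rw [smul_smul]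
    _ = (1 - q⁻¹)⁻¹ • (((1 / (q - 1)) : K) • (1 : B)) := by rw [h2]
    _ = ((1 - q⁻¹)⁻¹ * (1 / (q - 1))) • (1 : B) := by rw [smul_smul]
    _ = algebraMap K B (q / (q - 1) ^ 2) := by
        rw [Algebra.algebraMap_eq_smul_one]
        congr 1
        have e1 : (1:K) - q⁻¹ = (q - 1)/q := by field_simp
        rw [e1, inv_div, div_mul_div_comm, mul_one, sq]

end AuxProofs

lemma serre1 {K : Type} [Field K] (q : K) {B : Type} [CommRing B] [Algebra K B] (a b : B) :
    a*a*b - (1+q⁻¹) • (a*b*a) + q⁻¹ • (b*a*a) = 0 := by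
  rw [Algebra.smul_def, Algebra.smul_def, map_add, map_one]; ring

lemma serre2 {K : Type} [Field K] (q : K) {B : Type} [CommRing B] [Algebra K B] (a b : B) :
    a*b*b - (1+q⁻¹) • (b*a*b) + q⁻¹ • (b*b*a) = 0 := by
  rw [Algebra.smul_def, Algebra.smul_def, map_add, map_one]; ring

lemma relxy1 {K : Type} [Field K] (q : K)
    (hid : q/(q-1)^2 - q * (q/(q-1)^2) + q/(q-1) = 0)
    {B : Type} [CommRing B] [Algebra K B] (a b : B)
    (h : a * b = algebraMap K B (q/(q-1)^2)) :
    b * a - q • (a * b) + (q/(q-1)) • (1 : B) = 0 := by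
  rw [mul_comm b a, h, Algebra.smul_def, Algebra.smul_def, mul_one, ← map_mul, ← map_sub,
    ← map_add, hid, map_zero]

lemma relxy2 {K : Type} [Field K] (q : K)
    (hid : q/(q-1)^2 - q⁻¹ * (q/(q-1)^2) - 1/(q-1) = 0)
    {B : Type} [CommRing B] [Algebra K B] (a b : B)
    (h : a * b = algebraMap K B (q/(q-1)^2)) :
    b * a - q⁻¹ • (a * b) - (1/(q-1)) • (1 : B) = 0 := by
  rw [mul_comm b a, h, Algebra.smul_def, Algebra.smul_def, mul_one, ← map_mul, ← map_sub,
    ← map_sub, hid, map_zero]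

set_option maxHeartbeats 2000000 in
open MvPolynomial in
theorem main_iso {K : Type} [Field K] (q : K) (hq0 : q ≠ 0) (hq1 : q - 1 ≠ 0) :
    ∃ e : RingQuot (CommRel K q) ≃ₐ[K] (MvPolynomial (ℤ ⊕ ℤ) K ⧸ TorusIdeal K q),
      (∀ i : ℤ, e (RingQuot.mkAlgHom K (CommRel K q) (xA K q i)) =
          Ideal.Quotient.mk (TorusIdeal K q) (X (Sum.inl i))) ∧
      (∀ i : ℤ, e (RingQuot.mkAlgHom K (CommRel K q) (yA K q i)) =
          Ideal.Quotient.mk (TorusIdeal K q) (X (Sum.inr i))) := by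
  set c : K := q / (q - 1) ^ 2 with hc
  let mkQ : MvPolynomial (ℤ ⊕ ℤ) K →ₐ[K] MvPolynomial (ℤ ⊕ ℤ) K ⧸ TorusIdeal K q :=
    Ideal.Quotient.mkₐ K (TorusIdeal K q)
  have hmk : ∀ p : MvPolynomial (ℤ ⊕ ℤ) K, mkQ p = Ideal.Quotient.mk (TorusIdeal K q) p :=
    fun _ => rfl
  have halg : algebraMap K (MvPolynomial (ℤ ⊕ ℤ) K ⧸ TorusIdeal K q) c = mkQ (C c) := by
    rw [hmk, show (C c : MvPolynomial (ℤ ⊕ ℤ) K) = algebraMap K _ c from rfl,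
      Ideal.Quotient.mk_algebraMap]
  have hxy : ∀ i : ℤ, mkQ (X (Sum.inl i)) * mkQ (X (Sum.inr i)) =
      algebraMap K (MvPolynomial (ℤ ⊕ ℤ) K ⧸ TorusIdeal K q) c := by
    intro i
    rw [← map_mul, halg, hmk, hmk, Ideal.Quotient.eq]
    exact Ideal.subset_span (Or.inl ⟨i, rfl⟩)
  have hxy' : ∀ i : ℤ, mkQ (X (Sum.inl (i+1))) * mkQ (X (Sum.inr i)) =
      algebraMap K (MvPolynomial (ℤ ⊕ ℤ) K ⧸ TorusIdeal K q) c := by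
    intro i
    rw [← map_mul, halg, hmk, hmk, Ideal.Quotient.eq]
    exact Ideal.subset_span (Or.inr ⟨i, rfl⟩)
  let f0 : FreeAlgebra K (ℤ ⊕ ℤ) →ₐ[K] MvPolynomial (ℤ ⊕ ℤ) K ⧸ TorusIdeal K q :=
    FreeAlgebra.lift K (fun s => mkQ (X s))
  have hf0 : ∀ s, f0 (FreeAlgebra.ι K s) = mkQ (X s) := fun s =>
    FreeAlgebra.lift_ι_apply _ _
  have hserre1 : ∀ a b : MvPolynomial (ℤ ⊕ ℤ) K ⧸ TorusIdeal K q,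
      a*a*b - (1+q⁻¹) • (a*b*a) + q⁻¹ • (b*a*a) = 0 := fun a b => serre1 q a b
  have hserre2 : ∀ a b : MvPolynomial (ℤ ⊕ ℤ) K ⧸ TorusIdeal K q,
      a*b*b - (1+q⁻¹) • (b*a*b) + q⁻¹ • (b*b*a) = 0 := fun a b => serre2 q a b
  have hid1 : q/(q-1)^2 - q * (q/(q-1)^2) + q/(q-1) = 0 := by
    field_simp; ring
  have hid2 : q/(q-1)^2 - q⁻¹ * (q/(q-1)^2) - 1/(q-1) = 0 := by
    field_simp; ring
  have hrel : ∀ ⦃u w : FreeAlgebra K (ℤ ⊕ ℤ)⦄, SphRel K q u w → f0 u = f0 w := by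
    intro u w h
    induction h with
    | x1 i =>
        simp only [map_add, map_sub, map_mul, map_smul, map_zero, hf0]
        exact hserre1 _ _
    | x2 i =>
        simp only [map_add, map_sub, map_mul, map_smul, map_zero, hf0]
        exact hserre2 _ _
    | x3 i j h =>
        simp only [map_mul, hf0]; exact mul_comm _ _
    | y1 i =>
        simp only [map_add, map_sub, map_mul, map_smul, map_zero, hf0]
        exact hserre1 _ _
    | y2 i =>
        simp only [map_add, map_sub, map_mul, map_smul, map_zero, hf0]
        exact hserre2 _ _
    | y3 i j h =>
        simp only [map_mul, hf0]; exact mul_comm _ _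
    | yx3 i j h1 h2 =>
        simp only [map_mul, hf0]; exact mul_comm _ _
    | yx1 i =>
        simp only [map_add, map_sub, map_mul, map_smul, map_zero, map_one, hf0]
        exact relxy1 q hid1 _ _ (hxy i)
    | yx2 i =>
        simp only [map_add, map_sub, map_mul, map_smul, map_zero, map_one, hf0]
        exact relxy2 q hid2 _ _ (hxy' i)
  let f1 : SphAlg K q →ₐ[K] MvPolynomial (ℤ ⊕ ℤ) K ⧸ TorusIdeal K q :=
    RingQuot.liftAlgHom K ⟨f0, hrel⟩
  have hcomm : ∀ ⦃u w : SphAlg K q⦄, CommRel K q u w → f1 u = f1 w := by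
    rintro u w ⟨a, b, rfl, rfl⟩
    simp only [map_mul]
    exact mul_comm _ _
  let F : RingQuot (CommRel K q) →ₐ[K] MvPolynomial (ℤ ⊕ ℤ) K ⧸ TorusIdeal K q :=
    RingQuot.liftAlgHom K ⟨f1, hcomm⟩
  let π : SphAlg K q →ₐ[K] RingQuot (CommRel K q) := RingQuot.mkAlgHom K (CommRel K q)
  let πS : FreeAlgebra K (ℤ ⊕ ℤ) →ₐ[K] SphAlg K q := RingQuot.mkAlgHom K (SphRel K q)
  let gen : (ℤ ⊕ ℤ) → RingQuot (CommRel K q) := fun s => π (πS (FreeAlgebra.ι K s))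
  have hab : ∀ i : ℤ, gen (Sum.inl i) * gen (Sum.inr i) =
      algebraMap K (RingQuot (CommRel K q)) c := by
    intro i
    apply solve1 hq1
    have h := congrArg π (RingQuot.mkAlgHom_rel K (SphRel.yx1 (K := K) (q := q) i))
    simp only [map_add, map_sub, map_mul, map_smul, map_zero, map_one] at h
    exact h
  have hab' : ∀ i : ℤ, gen (Sum.inl (i+1)) * gen (Sum.inr i) =
      algebraMap K (RingQuot (CommRel K q)) c := by
    intro i
    apply solve2 hq0 hq1
    have h := congrArg π (RingQuot.mkAlgHom_rel K (SphRel.yx2 (K := K) (q := q) i))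
    simp only [map_add, map_sub, map_mul, map_smul, map_zero, map_one] at h
    exact h
  let g0 : MvPolynomial (ℤ ⊕ ℤ) K →ₐ[K] RingQuot (CommRel K q) := MvPolynomial.aeval gen
  have hg0X : ∀ s, g0 (X s) = gen s := fun s => MvPolynomial.aeval_X gen s
  have hker : ∀ a ∈ TorusIdeal K q, g0 a = 0 := by
    intro a ha
    have hle : TorusIdeal K q ≤ RingHom.ker g0.toRingHom := by
      rw [Ideal.span_le]
      rintro p (⟨i, rfl⟩ | ⟨i, rfl⟩) <;>
        simp only [SetLike.mem_coe, RingHom.mem_ker, AlgHom.toRingHom_eq_coe, RingHom.coe_coe,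
          map_sub, map_mul, hg0X] <;>
        rw [show g0 (C c) = algebraMap K (RingQuot (CommRel K q)) c from
          MvPolynomial.aeval_C gen c]
      · rw [hab i, sub_self]
      · rw [hab' i, sub_self]
    exact hle ha
  let G : MvPolynomial (ℤ ⊕ ℤ) K ⧸ TorusIdeal K q →ₐ[K] RingQuot (CommRel K q) :=
    Ideal.Quotient.liftₐ _ g0 hker
  have hGX : ∀ s, G (mkQ (X s)) = gen s := by
    intro s
    rw [hmk, show G (Ideal.Quotient.mk (TorusIdeal K q) (X s)) =
      Ideal.Quotient.lift (TorusIdeal K q) (g0 : MvPolynomial (ℤ ⊕ ℤ) K →+* _) hker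
        (Ideal.Quotient.mk (TorusIdeal K q) (X s)) from Ideal.Quotient.liftₐ_apply _ _ _ _,
      ]
    exact (Ideal.Quotient.lift_mk _ _ _).trans (hg0X s)
  have hFgen : ∀ s, F (gen s) = mkQ (X s) := by
    intro s
    show F (RingQuot.mkAlgHom K (CommRel K q) (πS (FreeAlgebra.ι K s))) = mkQ (X s)
    rw [show F (RingQuot.mkAlgHom K (CommRel K q) (πS (FreeAlgebra.ι K s))) =
      f1 (πS (FreeAlgebra.ι K s)) from RingQuot.liftAlgHom_mkAlgHom_apply _ _ _ _]
    show f1 (RingQuot.mkAlgHom K (SphRel K q) (FreeAlgebra.ι K s)) = mkQ (X s)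
    rw [show f1 (RingQuot.mkAlgHom K (SphRel K q) (FreeAlgebra.ι K s)) =
      f0 (FreeAlgebra.ι K s) from RingQuot.liftAlgHom_mkAlgHom_apply _ _ _ _]
    exact hf0 s
  have hFG : F.comp G = AlgHom.id K (MvPolynomial (ℤ ⊕ ℤ) K ⧸ TorusIdeal K q) := by
    apply Ideal.Quotient.algHom_ext
    apply MvPolynomial.algHom_ext
    intro s
    simp only [AlgHom.comp_apply, AlgHom.id_apply]
    rw [show (Ideal.Quotient.mkₐ K (TorusIdeal K q)) (X s) = mkQ (X s) from rfl, hGX, hFgen]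
  have hGF : G.comp F = AlgHom.id K (RingQuot (CommRel K q)) := by
    have hext : ((G.comp F).comp (π.comp πS)) =
        ((AlgHom.id K (RingQuot (CommRel K q))).comp (π.comp πS)) := by
      apply FreeAlgebra.hom_ext
      funext s
      simp only [Function.comp_apply, AlgHom.comp_apply, AlgHom.id_apply]
      rw [show F (π (πS (FreeAlgebra.ι K s))) = mkQ (X s) from hFgen s, hGX]
    apply AlgHom.ext
    intro b
    obtain ⟨z, rfl⟩ := RingQuot.mkAlgHom_surjective K (CommRel K q) b
    obtain ⟨w, rfl⟩ := RingQuot.mkAlgHom_surjective K (SphRel K q) z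
    exact DFunLike.congr_fun hext w
  refine ⟨AlgEquiv.ofAlgHom F G hFG hGF, fun i => ?_, fun i => ?_⟩
  · exact hFgen (Sum.inl i)
  · exact hFgen (Sum.inr i)

set_option synthInstance.maxHeartbeats 1000000 in
theorem stmt_2 (q : ℕ) (hq : IsPrimePow q) :
    ∃ e : RingQuot (CommRel (Kf q) (q : Kf q)) ≃ₐ[Kf q]
        (MvPolynomial (ℤ ⊕ ℤ) (Kf q) ⧸ TorusIdeal (Kf q) (q : Kf q)),
      (∀ i : ℤ,
        e (RingQuot.mkAlgHom (Kf q) (CommRel (Kf q) (q : Kf q)) (xA (Kf q) (q : Kf q) i)) =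
          Ideal.Quotient.mk (TorusIdeal (Kf q) (q : Kf q)) (MvPolynomial.X (Sum.inl i))) ∧
      (∀ i : ℤ,
        e (RingQuot.mkAlgHom (Kf q) (CommRel (Kf q) (q : Kf q)) (yA (Kf q) (q : Kf q) i)) =
          Ideal.Quotient.mk (TorusIdeal (Kf q) (q : Kf q)) (MvPolynomial.X (Sum.inr i))) := by
  have h2 : 2 ≤ q := hq.two_le
  have hq0 : (q : Kf q) ≠ 0 := Nat.cast_ne_zero.mpr (by omega)
  have hq1 : (q : Kf q) - 1 ≠ 0 := by
    rw [sub_ne_zero]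
    exact_mod_cast (by omega : q ≠ 1)
  exact main_iso (q : Kf q) hq0 hq1

end
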